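/- Let p ≥ 5 be prime and let s = b + c(p−1) with 2 ≤ b ≤ p − 1 and 1 ≤ c ≤ p − 1. Let T = Σ C(s, j), where the sum runs over integers j with 0 < j < s and j ≡ b (mod p−1). Then p divides T, and b · (T/p) ≡ (b − s) (mod p); in particular the p-adic valuation of T is exactly 1 when b ≢ s (mod p). -/

import Mathlib

open Finset

-- nilpotent binomial
lemma aux_one_add_pow {R : Type*} [CommRing R] (y : R) (hy : y * y = 0) :
    ∀ n : ℕ, (1 + y) ^ n = 1 + n * y := by
  intro n
  induction n with
  | zero => simp
  | succ n ih =>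
    rw [pow_succ, ih]
    have : (1 + (n:R) * y) * (1 + y) = 1 + ((n:R)+1) * y + (n:R) * (y * y) := by ring
    rw [this, hy]
    push_cast
    ring

-- kernel elements
lemma aux_ker (p : ℕ) [Fact p.Prime] (y : ZMod (p^2))
    (h : (ZMod.castHom (dvd_pow_self p two_ne_zero) (ZMod p)) y = 0) :
    ∃ z : ZMod (p^2), y = (p : ZMod (p^2)) * z := by
  have hy : y = ((y.val : ℕ) : ZMod (p^2)) := by
    rw [ZMod.natCast_val, ZMod.cast_id]
  have h2 : ((y.val : ℕ) : ZMod p) = 0 := by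
    have := h
    rw [hy] at this
    simpa using this
  rw [ZMod.natCast_eq_zero_iff] at h2
  obtain ⟨m, hm⟩ := h2
  exact ⟨(m : ZMod (p^2)), by rw [hy, hm]; push_cast; ring⟩

lemma aux_sq_zero (p : ℕ) [Fact p.Prime] (z : ZMod (p^2)) :
    ((p : ZMod (p^2)) * z) * ((p : ZMod (p^2)) * z) = 0 := by
  have : ((p:ZMod (p^2)) * (p : ZMod (p^2))) = 0 := by
    have := ZMod.natCast_self (p^2)
    push_cast at this
    calc (p:ZMod (p^2)) * p = (p:ZMod (p^2))^2 := by ring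
    _ = 0 := this
  calc ((p : ZMod (p^2)) * z) * ((p : ZMod (p^2)) * z)
      = ((p:ZMod (p^2)) * p) * (z*z) := by ring
  _ = 0 := by rw [this, zero_mul]

-- unit criterion
lemma aux_unit (p : ℕ) [Fact p.Prime] (x : ZMod (p^2))
    (h : (ZMod.castHom (dvd_pow_self p two_ne_zero) (ZMod p)) x ≠ 0) : IsUnit x := by
  have hx : x = ((x.val : ℕ) : ZMod (p^2)) := by rw [ZMod.natCast_val, ZMod.cast_id]
  rw [hx, ZMod.isUnit_iff_coprime]
  have hnd : ¬ p ∣ x.val := by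
    intro hd
    apply h
    rw [hx]
    simp only [map_natCast]
    rwa [ZMod.natCast_eq_zero_iff]
  have h1 : Nat.Coprime x.val p := (Nat.coprime_comm.mp ((Fact.out : p.Prime).coprime_iff_not_dvd.mpr hnd))
  exact Nat.Coprime.pow_right _ h1

-- existence of ζ of "order" p-1
lemma aux_zeta (p : ℕ) [Fact p.Prime] (hp5 : 5 ≤ p) :
    ∃ ζ : ZMod (p^2), ζ ^ (p-1) = 1 ∧
      (∀ k : ℕ, ((ZMod.castHom (dvd_pow_self p two_ne_zero) (ZMod p)) ζ) ^ k = 1 → (p-1) ∣ k) := by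
  have hp : p.Prime := Fact.out
  haveI : NeZero (p^2) := ⟨by positivity⟩
  obtain ⟨u, hu⟩ := IsCyclic.exists_generator (α := (ZMod p)ˣ)
  have hou : orderOf u = p - 1 := by
    rw [orderOf_eq_card_of_forall_mem_zpowers hu, Nat.card_eq_fintype_card, ZMod.card_units]
  obtain ⟨w, hw⟩ := ZMod.unitsMap_surjective (dvd_pow_self p two_ne_zero) u
  set φ := ZMod.castHom (dvd_pow_self p two_ne_zero) (ZMod p) with hφ
  refine ⟨((w^p : (ZMod (p^2))ˣ) : ZMod (p^2)), ?_, ?_⟩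
  · have hcard : Fintype.card (ZMod (p^2))ˣ = p * (p-1) := by
      rw [ZMod.card_units_eq_totient, Nat.totient_prime_pow hp (by norm_num)]
      simp
    have : (w^p)^(p-1) = 1 := by
      rw [← pow_mul, ← hcard, pow_card_eq_one]
    calc ((w^p : (ZMod (p^2))ˣ) : ZMod (p^2)) ^ (p-1) = (((w^p)^(p-1) : (ZMod (p^2))ˣ) : ZMod (p^2)) := by
          push_cast; ring
    _ = 1 := by rw [this]; rfl
  · intro k hk
    have hφw : φ ((w : ZMod (p^2))) = (u : ZMod p) := by
      have := congrArg (fun v => ((v : (ZMod p)ˣ) : ZMod p)) hw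
      simpa [ZMod.unitsMap_def, hφ, ZMod.castHom_apply] using this
    have hk' : ((u : ZMod p))^(p*k) = 1 := by
      have : φ (((w^p : (ZMod (p^2))ˣ) : ZMod (p^2))) = (u:ZMod p)^p := by
        push_cast
        rw [map_pow, hφw]
      rw [pow_mul, ← this]
      exact hk
    have hku : (u^(p*k)) = 1 := by
      ext
      push_cast
      exact hk'
    have : orderOf u ∣ p * k := orderOf_dvd_of_pow_eq_one hku
    rw [hou] at this
    have hcop : Nat.Coprime (p-1) p := by
      have h1 : Nat.Coprime p (p-1) := (Fact.out : p.Prime).coprime_iff_not_dvd.mpr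
        (by intro h; have := Nat.le_of_dvd (by omega) h; omega)
      exact h1.symm
    exact (Nat.Coprime.dvd_of_dvd_mul_left hcop this)

lemma aux_filter (p : ℕ) [Fact p.Prime] (hp5 : 5 ≤ p) (ζ : ZMod (p^2))
    (hz1 : ζ ^ (p-1) = 1)
    (hz2 : ∀ k : ℕ, ((ZMod.castHom (dvd_pow_self p two_ne_zero) (ZMod p)) ζ) ^ k = 1 → (p-1) ∣ k)
    (k : ℕ) :
    ∑ t ∈ range (p-1), (ζ^k)^t = if (p-1) ∣ k then ((p-1 : ℕ) : ZMod (p^2)) else 0 := by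
  set φ := ZMod.castHom (dvd_pow_self p two_ne_zero) (ZMod p) with hφ
  by_cases hd : (p-1) ∣ k
  · obtain ⟨k', rfl⟩ := hd
    rw [if_pos ⟨k', rfl⟩]
    have h1 : ζ ^ ((p-1) * k') = 1 := by rw [pow_mul, hz1, one_pow]
    rw [h1]
    simp
  · rw [if_neg hd]
    set x := ζ^k with hx
    have hxp : x ^ (p-1) = 1 := by rw [hx, ← pow_mul, mul_comm, pow_mul, hz1, one_pow]
    have hgeom : (∑ t ∈ range (p-1), x^t) * (x - 1) = 0 := by
      rw [geom_sum_mul, hxp, sub_self]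
    have hunit : IsUnit (x - 1) := by
      apply aux_unit
      intro h0
      have h1 : φ x = 1 := by
        have h2 : φ (x - 1) = 0 := h0
        rw [map_sub, map_one, sub_eq_zero] at h2
        exact h2
      apply hd
      apply hz2 k
      rw [← map_pow, ← hx]
      exact h1
    have := hunit.mul_right_cancel (by rw [hgeom, zero_mul] : (∑ t ∈ range (p-1), x^t) * (x - 1) = 0 * (x-1))
    exact this

lemma aux_modiff (p b j : ℕ) (hb2 : b ≤ p - 1) :
    (p-1) ∣ (p-1-b+j) ↔ j % (p-1) = b % (p-1) := by
  set d := p - 1 with hd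
  constructor
  · intro h
    have h1 : d - b + j ≡ 0 [MOD d] := Nat.modEq_zero_iff_dvd.mpr h
    have h2 : d - b + b ≡ 0 [MOD d] := by
      have : d - b + b = d := by omega
      rw [this]
      exact Nat.modEq_zero_iff_dvd.mpr dvd_rfl
    exact Nat.ModEq.add_left_cancel' (d - b) (h1.trans h2.symm)
  · intro h
    have h1 : d - b + j ≡ d - b + b [MOD d] := Nat.ModEq.add_left _ h
    have h2 : d - b + b = d := by omega
    rw [h2] at h1
    exact Nat.modEq_zero_iff_dvd.mp (h1.trans (Nat.modEq_zero_iff_dvd.mpr dvd_rfl))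

lemma aux_key1 (p b : ℕ) [Fact p.Prime] (hp5 : 5 ≤ p) (hb2 : b ≤ p - 1) (ζ : ZMod (p^2))
    (hz1 : ζ ^ (p-1) = 1)
    (hz2 : ∀ k : ℕ, ((ZMod.castHom (dvd_pow_self p two_ne_zero) (ZMod p)) ζ) ^ k = 1 → (p-1) ∣ k)
    (m : ℕ) :
    ∑ t ∈ range (p-1), ζ^(t*(p-1-b)) * (1+ζ^t)^m
      = ((p-1 : ℕ) : ZMod (p^2)) *
        ∑ j ∈ (range (m+1)).filter (fun j => j % (p-1) = b % (p-1)), (m.choose j : ZMod (p^2)) := by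
  set d := p - 1 with hd
  calc ∑ t ∈ range d, ζ^(t*(d-b)) * (1+ζ^t)^m
      = ∑ t ∈ range d, ∑ j ∈ range (m+1), (ζ^((d-b)+j))^t * (m.choose j : ZMod (p^2)) := by
        refine Finset.sum_congr rfl fun t _ => ?_
        rw [add_comm (1 : ZMod (p^2)) (ζ^t), add_pow, Finset.mul_sum]
        refine Finset.sum_congr rfl fun j _ => ?_
        rw [one_pow, mul_one, ← pow_mul, ← pow_mul, ← mul_assoc, ← pow_add]
        congr 2
        ring
    _ = ∑ j ∈ range (m+1), ∑ t ∈ range d, (ζ^((d-b)+j))^t * (m.choose j : ZMod (p^2)) := Finset.sum_comm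
    _ = ∑ j ∈ range (m+1), (if d ∣ ((d-b)+j) then ((d:ℕ) : ZMod (p^2)) else 0) * (m.choose j : ZMod (p^2)) := by
        refine Finset.sum_congr rfl fun j _ => ?_
        rw [← Finset.sum_mul, aux_filter p hp5 ζ hz1 hz2 ((d-b)+j)]
    _ = ∑ j ∈ range (m+1), (if j % d = b % d then ((d:ℕ) : ZMod (p^2)) * (m.choose j : ZMod (p^2)) else 0) := by
        refine Finset.sum_congr rfl fun j _ => ?_
        rw [ite_mul, zero_mul, if_congr (aux_modiff p b j hb2) rfl rfl]
    _ = ((d:ℕ) : ZMod (p^2)) * ∑ j ∈ (range (m+1)).filter (fun j => j % d = b % d), (m.choose j : ZMod (p^2)) := by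
        rw [Finset.sum_filter, Finset.mul_sum]
        refine Finset.sum_congr rfl fun j _ => ?_
        split_ifs <;> simp

lemma aux_point (p b c : ℕ) [Fact p.Prime] (hb1 : 2 ≤ b) (x : ZMod (p^2)) :
    x^(b + c*(p-1)) - x^b = (c : ZMod (p^2)) * (x^(b+(p-1)) - x^b) := by
  set φ := ZMod.castHom (dvd_pow_self p two_ne_zero) (ZMod p) with hφ
  by_cases h : φ x = 0
  · obtain ⟨z, rfl⟩ := aux_ker p x h
    have hsq := aux_sq_zero p z
    have hzero : ∀ n : ℕ, 2 ≤ n → ((p : ZMod (p^2)) * z)^n = 0 := by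
      intro n hn
      obtain ⟨m, rfl⟩ : ∃ m, n = 2 + m := ⟨n - 2, by omega⟩
      have h2 : ((p : ZMod (p^2)) * z) ^ 2 = 0 := (pow_two _).trans hsq
      rw [pow_add, h2, zero_mul]
    rw [hzero _ (by omega), hzero _ (by omega), hzero _ (by omega)]
    simp
  · have hne : φ x ≠ 0 := h
    have hfermat : φ (x^(p-1)) = 1 := by
      rw [map_pow]
      exact ZMod.pow_card_sub_one_eq_one hne
    have h0 : φ (x^(p-1) - 1) = 0 := by rw [map_sub, map_one, hfermat, sub_self]
    obtain ⟨z, hz⟩ := aux_ker p _ h0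
    have hz' : x^(p-1) = 1 + (p : ZMod (p^2)) * z := by rw [← hz]; ring
    have hsq := aux_sq_zero p z
    have h1 : x^(c*(p-1)) = 1 + (c : ZMod (p^2)) * ((p : ZMod (p^2)) * z) := by
      rw [mul_comm c (p-1), pow_mul, hz', aux_one_add_pow _ hsq]
    rw [pow_add, pow_add, h1, hz']
    ring

lemma aux_prod_fac (p : ℕ) (hp : 1 ≤ p) :
    ∀ n : ℕ, n.factorial * ((p-1)+n).choose n = ∏ i ∈ range n, (p + i) := by
  intro n
  induction n with
  | zero => simp
  | succ n ih =>
    rw [Finset.prod_range_succ, ← ih, Nat.factorial_succ]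
    have hs := Nat.add_one_mul_choose_eq ((p-1)+n) n
    have hpn : (p-1) + n + 1 = p + n := by omega
    calc (n+1) * n.factorial * ((p-1)+(n+1)).choose (n+1)
        = n.factorial * (((p-1)+n+1).choose (n+1) * (n+1)) := by ring_nf
      _ = n.factorial * (Nat.succ ((p-1)+n) * ((p-1)+n).choose n) := by rw [← hs]
      _ = n.factorial * ((p-1)+n).choose n * (p + n) := by rw [Nat.succ_eq_add_one, hpn]; ring

lemma aux_prod_mod (p b : ℕ) [Fact p.Prime] (hb : 1 ≤ b) :
    ((p:ℤ))^2 ∣ (∏ i ∈ range b, ((p:ℤ) + i)) - (p:ℤ) * ((b-1).factorial : ℤ) := by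
  obtain ⟨b', rfl⟩ : ∃ b', b = b' + 1 := ⟨b-1, by omega⟩
  rw [Finset.prod_range_succ']
  simp only [Nat.cast_zero, add_zero, Nat.add_sub_cancel]
  have key : ∀ X F : ℤ, (p:ℤ) ∣ X - F → (p:ℤ)^2 ∣ X * (p:ℤ) - (p:ℤ) * F := by
    rintro X F ⟨k, hk⟩
    refine ⟨k, ?_⟩
    calc X * (p:ℤ) - (p:ℤ) * F = (p:ℤ) * (X - F) := by ring
      _ = (p:ℤ) * ((p:ℤ) * k) := by rw [hk]
      _ = (p:ℤ)^2 * k := by ring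
  apply key
  rw [← ZMod.intCast_zmod_eq_zero_iff_dvd]
  push_cast
  rw [ZMod.natCast_self]
  have hfac : ((b'.factorial : ℕ) : ZMod p) = ∏ i ∈ range b', ((i : ZMod p) + 1) := by
    rw [← Finset.prod_range_add_one_eq_factorial]
    push_cast
    rfl
  rw [hfac]
  rw [sub_eq_zero]
  refine Finset.prod_congr rfl fun i _ => ?_
  ring

lemma aux_set_b (p b : ℕ) (hp5 : 5 ≤ p) (hb1 : 2 ≤ b) (hb2 : b ≤ p-1) :
    (range (b+1)).filter (fun j => j % (p-1) = b % (p-1))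
      = if b = p-1 then ({0, b} : Finset ℕ) else {b} := by
  set d := p - 1 with hd
  have hd4 : 4 ≤ d := by omega
  by_cases hbd : b = d
  · rw [if_pos hbd]
    ext j
    simp only [Finset.mem_filter, Finset.mem_range, Finset.mem_insert, Finset.mem_singleton]
    constructor
    · rintro ⟨hj, hmod⟩
      rw [hbd, Nat.mod_self] at hmod
      rcases Nat.lt_or_ge j d with h | h
      · left; rw [Nat.mod_eq_of_lt h] at hmod; exact hmod
      · right; omega
    · rintro (rfl | rfl)
      · exact ⟨by omega, by rw [hbd, Nat.mod_self, Nat.zero_mod]⟩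
      · exact ⟨by omega, rfl⟩
  · rw [if_neg hbd]
    have hblt : b < d := by omega
    ext j
    simp only [Finset.mem_filter, Finset.mem_range, Finset.mem_singleton]
    constructor
    · rintro ⟨hj, hmod⟩
      rw [Nat.mod_eq_of_lt hblt, Nat.mod_eq_of_lt (by omega : j < d)] at hmod
      exact hmod
    · rintro rfl
      exact ⟨by omega, rfl⟩

lemma aux_set_bd (p b : ℕ) (hp5 : 5 ≤ p) (hb1 : 2 ≤ b) (hb2 : b ≤ p-1) :
    (range (b+(p-1)+1)).filter (fun j => j % (p-1) = b % (p-1))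
      = if b = p-1 then ({0, p-1, 2*(p-1)} : Finset ℕ) else {b, b+(p-1)} := by
  set d := p - 1 with hd
  have hd4 : 4 ≤ d := by omega
  by_cases hbd : b = d
  · rw [if_pos hbd]
    ext j
    simp only [Finset.mem_filter, Finset.mem_range, Finset.mem_insert, Finset.mem_singleton]
    constructor
    · rintro ⟨hj, hmod⟩
      rw [hbd, Nat.mod_self] at hmod
      have hdm := Nat.div_add_mod j d
      rw [hmod, Nat.add_zero] at hdm
      have hq : j / d ≤ 2 := by
        by_contra hq
        have : 3 ≤ j / d := by omega
        have : d * 3 ≤ d * (j / d) := Nat.mul_le_mul_left d this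
        omega
      interval_cases h : j / d <;> omega
    · rintro (rfl | rfl | rfl)
      · exact ⟨by omega, by rw [hbd, Nat.mod_self, Nat.zero_mod]⟩
      · exact ⟨by omega, by rw [hbd, Nat.mod_self]⟩
      · exact ⟨by omega, by rw [hbd, Nat.mod_self, Nat.mul_mod_left]⟩
  · rw [if_neg hbd]
    have hblt : b < d := by omega
    ext j
    simp only [Finset.mem_filter, Finset.mem_range, Finset.mem_insert, Finset.mem_singleton]
    constructor
    · rintro ⟨hj, hmod⟩
      rw [Nat.mod_eq_of_lt hblt] at hmod
      have hdm := Nat.div_add_mod j d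
      rw [hmod] at hdm
      have hq : j / d ≤ 1 := by
        by_contra hq
        have : 2 ≤ j / d := by omega
        have : d * 2 ≤ d * (j / d) := Nat.mul_le_mul_left d this
        omega
      interval_cases h : j / d <;> omega
    · rintro (rfl | rfl)
      · exact ⟨by omega, by rw [Nat.mod_eq_of_lt hblt]⟩
      · exact ⟨by omega, by rw [Nat.add_mod_right, Nat.mod_eq_of_lt hblt]⟩

lemma aux_range_split (s : ℕ) (hs : 2 ≤ s) :
    range (s+1) = insert 0 (insert s (Finset.Ioo 0 s)) := by
  ext j
  simp only [Finset.mem_range, Finset.mem_insert, Finset.mem_Ioo]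
  omega

lemma aux_S_b (p b : ℕ) (hp5 : 5 ≤ p) (hb1 : 2 ≤ b) (hb2 : b ≤ p-1) :
    ∑ j ∈ (range (b+1)).filter (fun j => j % (p-1) = b % (p-1)), b.choose j
      = if b = p-1 then 2 else 1 := by
  rw [aux_set_b p b hp5 hb1 hb2]
  split_ifs with h
  · rw [Finset.sum_pair (by omega : (0:ℕ) ≠ b)]
    simp
  · simp

lemma aux_S_bd (p b : ℕ) (hp5 : 5 ≤ p) (hb1 : 2 ≤ b) (hb2 : b ≤ p-1) :
    ∑ j ∈ (range (b+(p-1)+1)).filter (fun j => j % (p-1) = b % (p-1)), (b+(p-1)).choose j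
      = (if b = p-1 then 2 else 1) + (b+(p-1)).choose b := by
  rw [aux_set_bd p b hp5 hb1 hb2]
  split_ifs with h
  · subst h
    rw [show ({0, p-1, 2*(p-1)} : Finset ℕ) = insert 0 {p-1, 2*(p-1)} from rfl,
      Finset.sum_insert (by simp; omega), Finset.sum_pair (by omega : p-1 ≠ 2*(p-1))]
    rw [Nat.choose_zero_right, show 2*(p-1) = (p-1)+(p-1) by ring, Nat.choose_self]
    omega
  · rw [Finset.sum_pair (by omega : b ≠ b+(p-1)), Nat.choose_self]
    omega

lemma aux_S_s (p b c s : ℕ) (hp5 : 5 ≤ p) (hb1 : 2 ≤ b) (hb2 : b ≤ p-1)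
    (hc1 : 1 ≤ c) (hs : s = b + c * (p-1)) :
    ∑ j ∈ (range (s+1)).filter (fun j => j % (p-1) = b % (p-1)), s.choose j
      = (if b = p-1 then 2 else 1)
        + ∑ j ∈ (Finset.Ioo 0 s).filter (fun j => j % (p-1) = b % (p-1)), s.choose j := by
  have hs2 : 2 ≤ s := by
    have : 4 ≤ p - 1 := by omega
    calc 2 ≤ b := hb1
    _ ≤ b + c * (p-1) := by omega
    _ = s := hs.symm
  have hPs : s % (p-1) = b % (p-1) := by rw [hs]; exact Nat.add_mul_mod_self_right b c (p-1)
  rw [aux_range_split s hs2, Finset.filter_insert, Finset.filter_insert, if_pos hPs]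
  have hsnot : s ∉ (Finset.Ioo 0 s).filter (fun j => j % (p-1) = b % (p-1)) := by simp
  by_cases hbd : b = p-1
  · have hP0 : 0 % (p-1) = b % (p-1) := by rw [hbd, Nat.mod_self, Nat.zero_mod]
    rw [if_pos hP0, Finset.sum_insert (by simp; omega), Finset.sum_insert hsnot,
      Nat.choose_zero_right, Nat.choose_self, if_pos hbd]
    try omega
  · have hP0 : ¬ (0 % (p-1) = b % (p-1)) := by
      rw [Nat.zero_mod, Nat.mod_eq_of_lt (by omega : b < p-1)]
      omega
    rw [if_neg hP0, Finset.sum_insert hsnot, Nat.choose_self, if_neg hbd]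
    try omega

/-- p ∣ T and b·(T/p) ≡ b − s (mod p), where
    T = Σ_{0<j<s, j≡b (p−1)} C(s,j); moreover ν_p(T) = 1 when b ≢ s (mod p). -/
theorem stmt_10 (p b c s : ℕ) (hp : p.Prime) (hp5 : 5 ≤ p)
    (hb1 : 2 ≤ b) (hb2 : b ≤ p - 1) (hc1 : 1 ≤ c) (hc2 : c ≤ p - 1)
    (hs : s = b + c * (p - 1)) :
    let T : ℤ := ∑ j ∈ (Finset.Ioo 0 s).filter (fun j => j % (p - 1) = b % (p - 1)),
      (s.choose j : ℤ)
    (p : ℤ) ∣ T ∧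
    (b : ℤ) * (T / (p : ℤ)) ≡ (b : ℤ) - (s : ℤ) [ZMOD (p : ℤ)] ∧
    (¬ ((b : ℤ) ≡ (s : ℤ) [ZMOD (p : ℤ)]) → ¬ ((p : ℤ) ^ 2 ∣ T)) := by
  intro T
  haveI : Fact p.Prime := ⟨hp⟩
  have hT : T = ∑ j ∈ (Finset.Ioo 0 s).filter (fun j => j % (p - 1) = b % (p - 1)),
      (s.choose j : ℤ) := rfl
  set T' : ℕ := ∑ j ∈ (Finset.Ioo 0 s).filter (fun j => j % (p - 1) = b % (p - 1)),
      s.choose j with hT'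
  have hTT' : T = (T' : ℤ) := by rw [hT, hT', Nat.cast_sum]
  set e : ℕ := if b = p-1 then 2 else 1 with he
  set C : ℕ := (b+(p-1)).choose b with hC
  -- step 1 : T' ≡ c * C mod p^2
  obtain ⟨ζ, hz1, hz2⟩ := aux_zeta p hp5
  have hkey := aux_key1 p b hp5 hb2 ζ hz1 hz2
  have hsum : (∑ t ∈ range (p-1), ζ^(t*(p-1-b)) * (1+ζ^t)^s)
      - (∑ t ∈ range (p-1), ζ^(t*(p-1-b)) * (1+ζ^t)^b)
      = (c : ZMod (p^2)) * ((∑ t ∈ range (p-1), ζ^(t*(p-1-b)) * (1+ζ^t)^(b+(p-1)))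
          - (∑ t ∈ range (p-1), ζ^(t*(p-1-b)) * (1+ζ^t)^b)) := by
    rw [← Finset.sum_sub_distrib, ← Finset.sum_sub_distrib, Finset.mul_sum]
    refine Finset.sum_congr rfl fun t _ => ?_
    have hpt := aux_point p b c hb1 (1+ζ^t)
    rw [hs]
    linear_combination (ζ^(t*(p-1-b))) * hpt
  rw [hkey s, hkey b, hkey (b+(p-1))] at hsum
  have hSsR : (∑ j ∈ (range (s+1)).filter (fun j => j % (p-1) = b % (p-1)),
      (s.choose j : ZMod (p^2))) = ((e + T' : ℕ) : ZMod (p^2)) := by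
    rw [← Nat.cast_sum, aux_S_s p b c s hp5 hb1 hb2 hc1 hs]
  have hSbR : (∑ j ∈ (range (b+1)).filter (fun j => j % (p-1) = b % (p-1)),
      (b.choose j : ZMod (p^2))) = ((e : ℕ) : ZMod (p^2)) := by
    rw [← Nat.cast_sum, aux_S_b p b hp5 hb1 hb2]
  have hSbdR : (∑ j ∈ (range (b+(p-1)+1)).filter (fun j => j % (p-1) = b % (p-1)),
      ((b+(p-1)).choose j : ZMod (p^2))) = ((e + C : ℕ) : ZMod (p^2)) := by
    rw [← Nat.cast_sum, aux_S_bd p b hp5 hb1 hb2]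
  rw [hSsR, hSbR, hSbdR] at hsum
  have hu : IsUnit (((p-1 : ℕ) : ℕ) : ZMod (p^2)) := by
    rw [ZMod.isUnit_iff_coprime]
    have h1 : Nat.Coprime p (p-1) := hp.coprime_iff_not_dvd.mpr
      (by intro h; have := Nat.le_of_dvd (by omega) h; omega)
    exact Nat.Coprime.pow_right _ h1.symm
  have hE : ((e + T' : ℕ) : ZMod (p^2)) - ((e : ℕ) : ZMod (p^2))
      = (c : ZMod (p^2)) * (((e + C : ℕ) : ZMod (p^2)) - ((e : ℕ) : ZMod (p^2))) := by
    apply hu.mul_left_cancel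
    linear_combination hsum
  have hfinal : (((T' : ℤ) - (c : ℤ) * (C : ℤ) : ℤ) : ZMod (p^2)) = 0 := by
    push_cast
    push_cast at hE
    linear_combination hE
  have hdvd : ((p:ℤ))^2 ∣ (T' : ℤ) - (c:ℤ) * (C:ℤ) := by
    have := (ZMod.intCast_zmod_eq_zero_iff_dvd _ (p^2)).mp hfinal
    push_cast at this
    exact this
  -- step 2 : factorial identity
  have hfac : ((b.factorial : ℤ)) * (C : ℤ) = ∏ i ∈ range b, ((p:ℤ) + i) := by
    have := aux_prod_fac p (by omega) b
    have hcomm : (p-1) + b = b + (p-1) := by ring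
    rw [hcomm] at this
    calc ((b.factorial : ℤ)) * (C : ℤ) = ((b.factorial * C : ℕ) : ℤ) := by push_cast; ring
    _ = ((∏ i ∈ range b, (p + i) : ℕ) : ℤ) := by rw [← this]
    _ = ∏ i ∈ range b, ((p:ℤ) + i) := by push_cast; rfl
  have hmod : ((p:ℤ))^2 ∣ (b.factorial : ℤ) * (C : ℤ) - (p:ℤ) * ((b-1).factorial : ℤ) := by
    rw [hfac]
    exact aux_prod_mod p b (by omega)
  -- p divides C
  have hpz : (p:ℤ) ≠ 0 := by positivity
  have hprime : Prime (p:ℤ) := Nat.prime_iff_prime_int.mp hp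
  have hpC : (p:ℤ) ∣ (C:ℤ) := by
    have h1 : (p:ℤ) ∣ (b.factorial : ℤ) * (C : ℤ) := by
      have h2 : (p:ℤ) ∣ (b.factorial : ℤ) * (C : ℤ) - (p:ℤ) * ((b-1).factorial : ℤ) :=
        dvd_trans (by exact ⟨(p:ℤ), by ring⟩) hmod
      have h3 : (p:ℤ) ∣ (p:ℤ) * ((b-1).factorial : ℤ) := ⟨_, rfl⟩
      have h4 := dvd_add h2 h3
      simpa using h4
    rcases hprime.dvd_mul.mp h1 with h | h
    · exfalso
      rw [Int.natCast_dvd_natCast] at h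
      have := (Nat.Prime.dvd_factorial hp).mp h
      omega
    · exact h
  obtain ⟨C1, hC1⟩ := hpC
  have hpT : (p:ℤ) ∣ (T' : ℤ) := by
    have h1 : (p:ℤ) ∣ (T' : ℤ) - (c:ℤ) * (C:ℤ) := dvd_trans ⟨(p:ℤ), by ring⟩ hdvd
    have h2 : (p:ℤ) ∣ (c:ℤ) * (C:ℤ) := Dvd.dvd.mul_left ⟨C1, hC1⟩ _
    have h4 := dvd_add h1 h2
    simpa using h4
  obtain ⟨T1, hT1⟩ := hpT
  have cancel : ∀ X : ℤ, (p:ℤ)^2 ∣ (p:ℤ) * X → (p:ℤ) ∣ X := by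
    rintro X ⟨k, hk⟩
    exact ⟨k, mul_left_cancel₀ hpz (by rw [hk]; ring)⟩
  -- mod p relations in ZMod p
  have hT1C1 : (p:ℤ) ∣ T1 - (c:ℤ) * C1 := by
    apply cancel
    have : (p:ℤ) * (T1 - (c:ℤ)*C1) = (T' : ℤ) - (c:ℤ) * (C:ℤ) := by rw [hT1, hC1]; ring
    rw [this]
    exact hdvd
  have hbC1 : (p:ℤ) ∣ (b.factorial : ℤ) * C1 - ((b-1).factorial : ℤ) := by
    apply cancel
    have : (p:ℤ) * ((b.factorial : ℤ) * C1 - ((b-1).factorial : ℤ))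
        = (b.factorial : ℤ) * (C : ℤ) - (p:ℤ) * ((b-1).factorial : ℤ) := by rw [hC1]; ring
    rw [this]
    exact hmod
  -- in ZMod p
  have hfaceq : (b.factorial : ℕ) = b * (b-1).factorial := by
    obtain ⟨b', rfl⟩ : ∃ b', b = b' + 1 := ⟨b-1, by omega⟩
    simp [Nat.factorial_succ]
  have hfne : (((b-1).factorial : ℕ) : ZMod p) ≠ 0 := by
    rw [Ne, ZMod.natCast_eq_zero_iff]
    intro h
    have := (Nat.Prime.dvd_factorial hp).mp h
    omega
  have hbC1' : (b : ZMod p) * ((C1 : ℤ) : ZMod p) = 1 := by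
    have h0 : (((b.factorial : ℤ) * C1 - ((b-1).factorial : ℤ) : ℤ) : ZMod p) = 0 := by
      rw [ZMod.intCast_zmod_eq_zero_iff_dvd]
      exact hbC1
    push_cast at h0
    rw [hfaceq] at h0
    push_cast at h0
    have h1 : ((b : ZMod p) * ((C1 : ℤ) : ZMod p)) * (((b-1).factorial : ℕ) : ZMod p)
        = 1 * (((b-1).factorial : ℕ) : ZMod p) := by
      rw [one_mul]
      linear_combination h0
    exact mul_right_cancel₀ hfne h1
  have hbT1 : (b : ZMod p) * ((T1 : ℤ) : ZMod p) = (c : ZMod p) := by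
    have h0 : ((T1 - (c:ℤ) * C1 : ℤ) : ZMod p) = 0 := by
      rw [ZMod.intCast_zmod_eq_zero_iff_dvd]; exact hT1C1
    push_cast at h0
    have h1 : ((T1 : ℤ) : ZMod p) = (c : ZMod p) * ((C1 : ℤ) : ZMod p) := by
      linear_combination h0
    rw [h1]
    calc (b : ZMod p) * ((c : ZMod p) * ((C1:ℤ) : ZMod p))
        = (c : ZMod p) * ((b : ZMod p) * ((C1:ℤ) : ZMod p)) := by ring
    _ = (c : ZMod p) := by rw [hbC1', mul_one]
  have hTdiv : T / (p:ℤ) = T1 := by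
    rw [hTT', hT1]
    exact Int.mul_ediv_cancel_left _ hpz
  have hsF : ((s:ℕ) : ZMod p) = (b : ZMod p) - (c : ZMod p) := by
    rw [hs]
    push_cast [Nat.cast_sub (by omega : 1 ≤ p)]
    rw [ZMod.natCast_self]
    ring
  refine ⟨?_, ?_, ?_⟩
  · rw [hTT', hT1]; exact ⟨T1, rfl⟩
  · rw [hTdiv, ← ZMod.intCast_eq_intCast_iff]
    push_cast
    rw [hbT1, hsF]
    ring
  · intro _ hdvd2
    rw [hTT', hT1] at hdvd2
    have hpT1 : (p:ℤ) ∣ T1 := cancel _ hdvd2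
    have h0 : ((T1 : ℤ) : ZMod p) = 0 := by
      rw [ZMod.intCast_zmod_eq_zero_iff_dvd]; exact hpT1
    rw [h0, mul_zero] at hbT1
    have : p ∣ c := by
      rw [← ZMod.natCast_eq_zero_iff]
      exact hbT1.symm
    have := Nat.le_of_dvd (by omega) this
    omega
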